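/- Let n, k ∈ ℕ, let p ∈ (0,1), s ∈ (0,1], γ, λ ∈ [0,1] (with λγn and (1−λ)γn integers), and let (B1,B2,G̃1,G̃2,π*) be distributed according to WCG(n,p,s,γ,λ). Let μ̂_k be any (measurably selected) output of the k-core estimator applied to (G̃1,G̃2). Then P( dom(μ̂_k) = core_k(G̃1 ∧_{π*} G̃2) and μ̂_k(i) = π*(i) for all i ∈ dom(μ̂_k) ) ≥ 2 − exp(n²ξ), where ξ := max_{1 ≤ d ≤ n} max_{μ ∈ M(id,d)} P( f(μ) ≥ k·d | π* = id )^{1/d}, with f(μ) := Σ_{i ∈ dom(μ), μ(i) ≠ i} deg_{G̃1 ∧_μ G̃2}(i). -/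

import Mathlib

open MeasureTheory ProbabilityTheory Filter Set
open scoped ENNReal Classical Topology

namespace Paper

/-- Index type of potential edges of a graph on `[n] = Fin n`. -/
abbrev EdgeIdx (n : ℕ) := {e : Sym2 (Fin n) // ¬ e.IsDiag}

/-- A graph on `[n]`, given by its edge indicators. -/
abbrev Graph (n : ℕ) := EdgeIdx n → Bool

instance (n : ℕ) : MeasurableSpace (Finset (Fin n)) := ⊤
instance (n : ℕ) : MeasurableSpace (Equiv.Perm (Fin n)) := ⊤

/-- Bernoulli measure on `Bool` with success probability `q` (clamped into `[0,1]`). -/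
noncomputable def bern (q : ℝ) : Measure Bool :=
  (PMF.bernoulli (min (Real.toNNReal q) 1) (min_le_right _ _)).toMeasure

/-- i.i.d. Bernoulli(q) edge indicators: the Erdős–Rényi measure on graphs on `[n]`. -/
noncomputable def erMeasure (n : ℕ) (q : ℝ) : Measure (Graph n) :=
  Measure.pi fun _ : EdgeIdx n => bern q

/-- Uniform probability measure on a finite set. -/
noncomputable def uniformFinset {α : Type*} [MeasurableSpace α] (t : Finset α) : Measure α :=
  (t.card : ℝ≥0∞)⁻¹ • ∑ a ∈ t, Measure.dirac a

/-- The uniform random permutation of `[n]`. -/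
noncomputable def uniformPerm (n : ℕ) : Measure (Equiv.Perm (Fin n)) :=
  uniformFinset Finset.univ

/-- The uniform random subset of `[n]` of size `m`. -/
noncomputable def uniformSized (n m : ℕ) : Measure (Finset (Fin n)) :=
  uniformFinset ((Finset.univ : Finset (Finset (Fin n))).filter fun S => S.card = m)

lemma not_isDiag_map {n : ℕ} (π : Equiv.Perm (Fin n)) {e : Sym2 (Fin n)} (h : ¬ e.IsDiag) :
    ¬ (e.map π).IsDiag := by
  induction e using Sym2.ind with
  | _ x y =>
    simp only [Sym2.map_pair_eq, Sym2.mk_isDiag_iff] at h ⊢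
    exact fun hxy => h (π.injective hxy)

/-- Action of a permutation on (indices of) potential edges. -/
def edgeMap {n : ℕ} (π : Equiv.Perm (Fin n)) (e : EdgeIdx n) : EdgeIdx n :=
  ⟨e.1.map π, not_isDiag_map π e.2⟩

/-- `{i,j}` is an edge of `G`. -/
def adjB {n : ℕ} (G : Graph n) (i j : Fin n) : Bool :=
  if h : i = j then false else G ⟨s(i, j), by simpa [Sym2.mk_isDiag_iff] using h⟩

/-- The potential edge `e` has an endpoint in `B`. -/
def touches {n : ℕ} (B : Finset (Fin n)) (e : EdgeIdx n) : Prop := ∃ i ∈ B, i ∈ e.1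

/-- Replace the edge status of every pair touching `B` by the fresh values `F`. -/
noncomputable def corrupt {n : ℕ} (B : Finset (Fin n)) (G F : Graph n) : Graph n :=
  fun e => if touches B e then F e else G e

/-- A matching: an injective map from a subset of `[n]` into `[n]`. -/
structure Matching (n : ℕ) where
  dom : Finset (Fin n)
  f : Fin n → Fin n
  injOn : Set.InjOn f dom

instance (n : ℕ) : MeasurableSpace (Matching n) := ⊤

/-- The overlap of a matching with a permutation: the number of correctly matched nodes. -/
def ov {n : ℕ} (μ : Matching n) (π : Equiv.Perm (Fin n)) : ℕ :=
  (μ.dom.filter fun i => μ.f i = π i).card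

/-- The output tuple `(B1, B2, G̃1, G̃2, π*)` of a corruption model. -/
structure Out (n : ℕ) where
  B1 : Finset (Fin n)
  B2 : Finset (Fin n)
  Gt1 : Graph n
  Gt2 : Graph n
  prm : Equiv.Perm (Fin n)

instance (n : ℕ) : MeasurableSpace (Out n) := ⊤

/-- Underlying sample space for the WCG model:
parent graph, two subsampling masks, two fresh-resampling graphs, π*, B1, B2. -/
abbrev WCGSpace (n : ℕ) :=
  Graph n × Graph n × Graph n × Graph n × Graph n ×
    Equiv.Perm (Fin n) × Finset (Fin n) × Finset (Fin n)

noncomputable def wcgBase (n : ℕ) (p s : ℝ) (a b : ℕ) : Measure (WCGSpace n) :=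
  (erMeasure n p).prod ((erMeasure n s).prod ((erMeasure n s).prod
    ((erMeasure n (p * s)).prod ((erMeasure n (p * s)).prod
      ((uniformPerm n).prod ((uniformSized n a).prod (uniformSized n b)))))))

noncomputable def wcgBuild (n : ℕ) (ω : WCGSpace n) : Out n :=
  { B1 := ω.2.2.2.2.2.2.1
    B2 := ω.2.2.2.2.2.2.2
    Gt1 := corrupt ω.2.2.2.2.2.2.1 (fun e => ω.1 e && ω.2.1 e) ω.2.2.2.1
    Gt2 := corrupt ω.2.2.2.2.2.2.2
      (fun e => ω.1 (edgeMap ω.2.2.2.2.2.1⁻¹ e) && ω.2.2.1 (edgeMap ω.2.2.2.2.2.1⁻¹ e))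
      ω.2.2.2.2.1
    prm := ω.2.2.2.2.2.1 }

/-- The weakly corrupted graphs model `WCG(n,p,s,γ,λ)`, where `a = λγn` and `b = (1-λ)γn`:
the joint law of `(B1, B2, G̃1, G̃2, π*)`. -/
noncomputable def WCG (n : ℕ) (p s : ℝ) (a b : ℕ) : Measure (Out n) :=
  (wcgBase n p s a b).map (wcgBuild n)

/-- The output tuple `(G1, G2, π*)` of the correlated Erdős–Rényi model. -/
structure CEROut (n : ℕ) where
  G1 : Graph n
  G2 : Graph n
  prm : Equiv.Perm (Fin n)

instance (n : ℕ) : MeasurableSpace (CEROut n) := ⊤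

abbrev CERSpace (n : ℕ) := Graph n × Graph n × Graph n × Equiv.Perm (Fin n)

noncomputable def cerBuild (n : ℕ) (ω : CERSpace n) : CEROut n :=
  { G1 := fun e => ω.1 e && ω.2.1 e
    G2 := fun e => ω.1 (edgeMap ω.2.2.2⁻¹ e) && ω.2.2.1 (edgeMap ω.2.2.2⁻¹ e)
    prm := ω.2.2.2 }

/-- The correlated Erdős–Rényi model `CER(n,p,s)`: the joint law of `(G1, G2, π*)`. -/
noncomputable def CER (n : ℕ) (p s : ℝ) : Measure (CEROut n) :=
  (cerBase n p s).map (cerBuild n)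
  where cerBase (n : ℕ) (p s : ℝ) : Measure (CERSpace n) :=
    (erMeasure n p).prod ((erMeasure n s).prod ((erMeasure n s).prod (uniformPerm n)))

/-- A strong adversary with auxiliary randomness in `U`: any rule producing, from `(G1,G2,π*)`
and an auxiliary sample, sets `B1`, `B2` of prescribed sizes and corrupted graphs agreeing
with `G1` (resp. `G2`) on every pair not touching `B1` (resp. `B2`). -/
structure Adversary (n a b : ℕ) (U : Type) where
  act : CEROut n → U → Out n
  prm_eq : ∀ ω u, (act ω u).prm = ω.prm
  cardB1 : ∀ ω u, (act ω u).B1.card = a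
  cardB2 : ∀ ω u, (act ω u).B2.card = b
  agree1 : ∀ ω u (e : EdgeIdx n), ¬ touches (act ω u).B1 e → (act ω u).Gt1 e = ω.G1 e
  agree2 : ∀ ω u (e : EdgeIdx n), ¬ touches (act ω u).B2 e → (act ω u).Gt2 e = ω.G2 e

/-- The strongly corrupted graphs model `SCG(n,p,s,γ,λ,A)`:
the joint law of `(B1, B2, G̃1, G̃2, π*)`. -/
noncomputable def SCG (n : ℕ) (p s : ℝ) {a b : ℕ} {U : Type} [MeasurableSpace U]
    (ν : Measure U) (A : Adversary n a b U) : Measure (Out n) :=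
  ((CER n p s).prod ν).map fun ω => A.act ω.1 ω.2

/-- Degree of `i` in the intersection graph `H1 ∧_μ H2`. -/
def interDeg {n : ℕ} (H1 H2 : Graph n) (μ : Matching n) (i : Fin n) : ℕ :=
  (μ.dom.filter fun j => adjB H1 i j ∧ adjB H2 (μ.f i) (μ.f j)).card

/-- Number of edges of the intersection graph `H1 ∧_μ H2`. -/
def interCount {n : ℕ} (H1 H2 : Graph n) (μ : Matching n) : ℕ :=
  ((μ.dom ×ˢ μ.dom).filter fun q =>
    q.1 < q.2 ∧ adjB H1 q.1 q.2 ∧ adjB H2 (μ.f q.1) (μ.f q.2)).card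

/-- `μ` is a `k`-core matching of `(H1,H2)`: min degree of `H1 ∧_μ H2` is at least `k`. -/
def IsKCoreMatching {n : ℕ} (k : ℕ) (H1 H2 : Graph n) (μ : Matching n) : Prop :=
  ∀ i ∈ μ.dom, k ≤ interDeg H1 H2 μ i

/-- `E` is a `k`-core estimator: it always outputs a `k`-core matching of maximal domain size. -/
def IsKCoreEstimator {n : ℕ} (k : ℕ) (E : Graph n × Graph n → Matching n) : Prop :=
  ∀ x : Graph n × Graph n, IsKCoreMatching k x.1 x.2 (E x) ∧
    ∀ μ : Matching n, IsKCoreMatching k x.1 x.2 μ → μ.dom.card ≤ (E x).dom.card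

/-- `E` is a maximum overlap estimator: its output maximizes the number of edges of the
intersection graph. -/
def IsMaxOverlapEstimator {n : ℕ} (E : Graph n × Graph n → Matching n) : Prop :=
  ∀ x : Graph n × Graph n, ∀ μ : Matching n, interCount x.1 x.2 μ ≤ interCount x.1 x.2 (E x)

/-- `X(π)`: the number of pairs `{i,j}` with `{i,j} ∈ E(G1)` and `{π i, π j} ∈ E(G2)`. -/
def Xcount {n : ℕ} (G1 G2 : Graph n) (π : Equiv.Perm (Fin n)) : ℕ :=
  (Finset.univ.filter fun e : EdgeIdx n => G1 e ∧ G2 (edgeMap π e)).card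

/-- The intersection graph `H1 ∧_π H2` (full vertex set, `π` a permutation). -/
def interGraph {n : ℕ} (H1 H2 : Graph n) (π : Equiv.Perm (Fin n)) : Graph n :=
  fun e => H1 e && H2 (edgeMap π e)

/-- Degree of `i` into the set `A` in the graph `G`. -/
def degInSet {n : ℕ} (G : Graph n) (A : Finset (Fin n)) (i : Fin n) : ℕ :=
  (A.filter fun j => adjB G i j).card

/-- Degree of `i` in the graph `G`. -/
def degFull {n : ℕ} (G : Graph n) (i : Fin n) : ℕ := degInSet G Finset.univ i

/-- `A` induces a subgraph of `G` of minimum degree at least `k`. -/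
def IsCoreSet {n : ℕ} (G : Graph n) (k : ℕ) (A : Finset (Fin n)) : Prop :=
  ∀ i ∈ A, k ≤ degInSet G A i

/-- The `k`-core of `G`: the largest vertex set inducing a subgraph of min degree `≥ k`
(equals the union of all such sets). -/
noncomputable def coreK {n : ℕ} (G : Graph n) (k : ℕ) : Finset (Fin n) :=
  ((Finset.univ : Finset (Finset (Fin n))).filter fun A => IsCoreSet G k A).sup id

/-! ### Auxiliary infrastructure -/

section AuxInstances

instance (n : ℕ) : MeasurableSingletonClass (Finset (Fin n)) := ⟨fun _ => trivial⟩
instance (n : ℕ) : MeasurableSingletonClass (Equiv.Perm (Fin n)) := ⟨fun _ => trivial⟩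
instance (n : ℕ) : MeasurableSingletonClass (Out n) := ⟨fun _ => trivial⟩
instance (n : ℕ) : DiscreteMeasurableSpace (Out n) := ⟨fun _ => trivial⟩
instance (n : ℕ) : DiscreteMeasurableSpace (Matching n) := ⟨fun _ => trivial⟩
instance (n : ℕ) : DiscreteMeasurableSpace (WCGSpace n) :=
  MeasurableSingletonClass.toDiscreteMeasurableSpace

noncomputable instance (n : ℕ) : Fintype (Matching n) :=
  Fintype.ofInjective (fun μ : Matching n => (μ.dom, μ.f))
    (by rintro ⟨⟩ ⟨⟩ h; simp_all)

instance (q : ℝ) : IsProbabilityMeasure (bern q) := PMF.toMeasure.isProbabilityMeasure _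

instance (n : ℕ) (q : ℝ) : IsProbabilityMeasure (erMeasure n q) := by
  unfold erMeasure; infer_instance

end AuxInstances

section MeasureAux

lemma matching_ext {n : ℕ} {μ ν : Matching n} (h1 : μ.dom = ν.dom) (h2 : μ.f = ν.f) : μ = ν := by
  cases μ; cases ν; simp_all

lemma measure_eq_sum_singletons {α : Type*} [Fintype α] [MeasurableSpace α]
    [MeasurableSingletonClass α] (μ : Measure α) (A : Set α) :
    μ A = ∑ a ∈ Finset.univ.filter (· ∈ A), μ {a} := by
  classical
  have hA : μ A = μ (⋃ a ∈ Finset.univ.filter (· ∈ A), ({a} : Set α)) := by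
    congr 1; ext x; simp
  rw [hA, measure_biUnion_finset]
  · intro x _ y _ hxy
    simp [Function.onFun, Set.disjoint_singleton, hxy]
  · exact fun a _ => measurableSet_singleton a

lemma measure_ext_singleton {α : Type*} [Fintype α] [MeasurableSpace α]
    [MeasurableSingletonClass α] {μ ν : Measure α} (h : ∀ a, μ {a} = ν {a}) : μ = ν := by
  ext A hA
  rw [measure_eq_sum_singletons μ A, measure_eq_sum_singletons ν A]
  exact Finset.sum_congr rfl fun a _ => h a

lemma uniformFinset_apply {α : Type*} [MeasurableSpace α] [MeasurableSingletonClass α]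
    (t : Finset α) (A : Set α) (hA : MeasurableSet A) :
    uniformFinset t A = (t.card : ℝ≥0∞)⁻¹ * (t.filter (· ∈ A)).card := by
  classical
  rw [uniformFinset, Measure.smul_apply, smul_eq_mul]
  congr 1
  rw [Measure.finset_sum_apply]
  rw [Finset.sum_congr rfl (fun a _ => Measure.dirac_apply' a hA)]
  simp only [Set.indicator_apply, Pi.one_apply]
  rw [Finset.sum_boole]

lemma uniformFinset_isProb {α : Type*} [MeasurableSpace α] [MeasurableSingletonClass α]
    {t : Finset α} (ht : t.Nonempty) : IsProbabilityMeasure (uniformFinset t) := by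
  constructor
  rw [uniformFinset_apply t _ MeasurableSet.univ]
  have : Finset.filter (fun x => x ∈ (Set.univ : Set α)) t = t := by
    apply Finset.filter_true_of_mem; intro _ _; trivial
  simp only [Set.mem_univ, Finset.filter_true, Finset.filter_true_of_mem (fun _ _ => trivial)]
  exact ENNReal.inv_mul_cancel (by exact_mod_cast ht.card_pos.ne') (by simp)

instance (n : ℕ) : IsProbabilityMeasure (uniformPerm n) :=
  uniformFinset_isProb ⟨1, Finset.mem_univ _⟩

lemma uniformSized_isProb {n m : ℕ} (h : m ≤ n) : IsProbabilityMeasure (uniformSized n m) := by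
  obtain ⟨t, -, ht⟩ := Finset.exists_subset_card_eq
    (show m ≤ (Finset.univ : Finset (Fin n)).card by simpa using h)
  exact uniformFinset_isProb ⟨t, by simpa using ht⟩

lemma uniformFinset_mp {α : Type*} [MeasurableSpace α] [MeasurableSingletonClass α]
    [DiscreteMeasurableSpace α] (t : Finset α) (g : α ≃ α) (hg : ∀ x, g x ∈ t ↔ x ∈ t) :
    MeasurePreserving g (uniformFinset t) (uniformFinset t) := by
  classical
  refine ⟨Measurable.of_discrete, ?_⟩
  ext A hA
  rw [Measure.map_apply Measurable.of_discrete hA, uniformFinset_apply _ _ (by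
    exact MeasurableSet.of_discrete), uniformFinset_apply _ _ hA]
  congr 2
  refine Finset.card_bij' (fun x _ => g x) (fun x _ => g.symm x) ?_ ?_ ?_ ?_
  · intro x hx
    simp only [Finset.mem_filter] at hx ⊢
    exact ⟨(hg x).2 hx.1, hx.2⟩
  · intro x hx
    simp only [Finset.mem_filter] at hx ⊢
    refine ⟨(hg _).1 (by simpa using hx.1), by simpa using hx.2⟩
  · intro x _; simp
  · intro x _; simp

lemma erMeasure_singleton (n : ℕ) (q : ℝ) (F : Graph n) :
    erMeasure n q {F} = ∏ e, bern q {F e} := by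
  have h : ({F} : Set (Graph n)) = Set.univ.pi (fun e => {F e}) := by
    ext G
    simp [Set.mem_pi, funext_iff, eq_comm]
  rw [h, erMeasure, Measure.pi_pi]

lemma erMeasure_mp (n : ℕ) (q : ℝ) (e : EdgeIdx n ≃ EdgeIdx n) :
    MeasurePreserving (fun F : Graph n => F ∘ e) (erMeasure n q) (erMeasure n q) := by
  refine ⟨Measurable.of_discrete, measure_ext_singleton fun F => ?_⟩
  rw [Measure.map_apply Measurable.of_discrete (measurableSet_singleton F)]
  have hpre : (fun F : Graph n => F ∘ e) ⁻¹' {F} = {F ∘ e.symm} := by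
    ext G
    constructor
    · intro h
      have h' : G ∘ ⇑e = F := h
      funext x
      have := congrFun h' (e.symm x)
      simpa using this
    · rintro rfl
      show (F ∘ e.symm) ∘ e = F
      funext x; simp
  rw [hpre, erMeasure_singleton, erMeasure_singleton]
  exact Equiv.prod_comp e.symm (fun x => bern q {F x})

end MeasureAux

section PhiAux

variable {n : ℕ}

lemma edgeMap_edgeMap (π σ : Equiv.Perm (Fin n)) (e : EdgeIdx n) :
    edgeMap π (edgeMap σ e) = edgeMap (π * σ) e := by
  apply Subtype.ext
  show Sym2.map π (Sym2.map σ e.1) = Sym2.map (π * σ) e.1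
  rw [Sym2.map_map]
  rfl

lemma edgeMap_one (e : EdgeIdx n) : edgeMap (1 : Equiv.Perm (Fin n)) e = e := by
  apply Subtype.ext
  show Sym2.map _ e.1 = e.1
  have : ⇑(1 : Equiv.Perm (Fin n)) = id := rfl
  rw [this, Sym2.map_id, id]

/-- `edgeMap π` as an equivalence on edge indices. -/
def edgeEquiv (π : Equiv.Perm (Fin n)) : EdgeIdx n ≃ EdgeIdx n where
  toFun := edgeMap π
  invFun := edgeMap π⁻¹
  left_inv e := by rw [edgeMap_edgeMap, inv_mul_cancel, edgeMap_one]
  right_inv e := by rw [edgeMap_edgeMap, mul_inv_cancel, edgeMap_one]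

/-- The image-by-`π` equivalence on subsets. -/
def finsetEquiv (π : Equiv.Perm (Fin n)) : Finset (Fin n) ≃ Finset (Fin n) where
  toFun B := B.image ⇑π
  invFun B := B.image ⇑π⁻¹
  left_inv B := by
    show Finset.image ⇑π⁻¹ (Finset.image ⇑π B) = B
    rw [Finset.image_image]
    have : (⇑π⁻¹ ∘ ⇑π) = id := by funext x; simp
    rw [this, Finset.image_id]
  right_inv B := by
    show Finset.image ⇑π (Finset.image ⇑π⁻¹ B) = B
    rw [Finset.image_image]
    have : (⇑π ∘ ⇑π⁻¹) = id := by funext x; simp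
    rw [this, Finset.image_id]

/-- The symmetry map on the WCG sample space. -/
def phi (π : Equiv.Perm (Fin n)) : WCGSpace n ≃ WCGSpace n :=
  (Equiv.refl (Graph n)).prodCongr ((Equiv.refl (Graph n)).prodCongr
    ((Equiv.refl (Graph n)).prodCongr ((Equiv.refl (Graph n)).prodCongr
      ((Equiv.arrowCongr (edgeEquiv π) (Equiv.refl Bool)).prodCongr
        ((Equiv.mulLeft π).prodCongr ((Equiv.refl (Finset (Fin n))).prodCongr
          (finsetEquiv π)))))))

lemma phi_apply (π : Equiv.Perm (Fin n)) (ω : WCGSpace n) :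
    phi π ω = (ω.1, ω.2.1, ω.2.2.1, ω.2.2.2.1, ω.2.2.2.2.1 ∘ edgeMap π⁻¹,
      π * ω.2.2.2.2.2.1, ω.2.2.2.2.2.2.1, ω.2.2.2.2.2.2.2.image π) := by
  rfl

lemma phi_mp (π : Equiv.Perm (Fin n)) (p s : ℝ) (a b : ℕ) (ha : a ≤ n) (hb : b ≤ n) :
    MeasurePreserving (phi π) (wcgBase n p s a b) (wcgBase n p s a b) := by
  haveI := uniformSized_isProb (n := n) ha
  haveI := uniformSized_isProb (n := n) hb
  have hF2 : MeasurePreserving (fun F : Graph n => F ∘ edgeMap π⁻¹)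
      (erMeasure n (p * s)) (erMeasure n (p * s)) := by
    have := erMeasure_mp n (p * s) (edgeEquiv π).symm
    exact this
  have hσ : MeasurePreserving (fun σ : Equiv.Perm (Fin n) => π * σ)
      (uniformPerm n) (uniformPerm n) :=
    uniformFinset_mp _ (Equiv.mulLeft π) (by intro x; simp)
  have hB2 : MeasurePreserving (fun B : Finset (Fin n) => B.image π)
      (uniformSized n b) (uniformSized n b) := by
    refine uniformFinset_mp _ (finsetEquiv π) ?_
    intro B
    simp only [Finset.mem_filter, Finset.mem_univ, true_and, finsetEquiv, Equiv.coe_fn_mk,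
      Finset.card_image_of_injective _ π.injective]
  exact (MeasurePreserving.id _).prod ((MeasurePreserving.id _).prod
    ((MeasurePreserving.id _).prod ((MeasurePreserving.id _).prod
      (hF2.prod (hσ.prod ((MeasurePreserving.id _).prod hB2))))))

lemma touches_image (π : Equiv.Perm (Fin n)) (B : Finset (Fin n)) (e : EdgeIdx n) :
    touches (B.image π) e ↔ touches B (edgeMap π⁻¹ e) := by
  unfold touches
  constructor
  · rintro ⟨i, hi, hie⟩
    obtain ⟨j, hj, rfl⟩ := Finset.mem_image.1 hi
    refine ⟨j, hj, ?_⟩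
    show j ∈ Sym2.map _ e.1
    rw [Sym2.mem_map]
    exact ⟨π j, hie, by simp⟩
  · rintro ⟨j, hj, hje⟩
    have : j ∈ Sym2.map (⇑π⁻¹) e.1 := hje
    rw [Sym2.mem_map] at this
    obtain ⟨x, hx, hxj⟩ := this
    refine ⟨x, ?_, hx⟩
    rw [Finset.mem_image]
    exact ⟨j, hj, by rw [← hxj]; simp⟩

lemma build_phi (π : Equiv.Perm (Fin n)) (ω : WCGSpace n) :
    wcgBuild n (phi π ω) =
      { B1 := (wcgBuild n ω).B1
        B2 := ((wcgBuild n ω).B2).image π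
        Gt1 := (wcgBuild n ω).Gt1
        Gt2 := fun e => (wcgBuild n ω).Gt2 (edgeMap π⁻¹ e)
        prm := π * (wcgBuild n ω).prm } := by
  obtain ⟨G, S1, S2, F1, F2, σ, B1, B2⟩ := ω
  rw [phi_apply]
  show Out.mk _ _ _ _ _ = _
  simp only [wcgBuild]
  refine congrArg₂ (fun x y => Out.mk B1 (B2.image π) x y (π * σ)) rfl ?_
  funext e
  show corrupt (B2.image π) _ _ e = corrupt B2 _ F2 (edgeMap π⁻¹ e)
  unfold corrupt
  by_cases h : touches B2 (edgeMap π⁻¹ e)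
  · rw [if_pos ((touches_image π B2 e).2 h), if_pos h]
    rfl
  · rw [if_neg (fun hc => h ((touches_image π B2 e).1 hc)), if_neg h]
    beta_reduce
    have : edgeMap (π * σ)⁻¹ e = edgeMap σ⁻¹ (edgeMap π⁻¹ e) := by
      rw [edgeMap_edgeMap, mul_inv_rev]
    rw [this]

end PhiAux

section MatchAux

variable {n : ℕ}

/-- The mismatch set of a matching relative to a permutation. -/
def Dset (π : Equiv.Perm (Fin n)) (μ : Matching n) : Finset (Fin n) :=
  μ.dom.filter fun i => μ.f i ≠ π i

/-- Canonical `π`-maximal matchings. -/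
def Canon (π : Equiv.Perm (Fin n)) (μ : Matching n) : Prop :=
  (∀ i, i ∉ Dset π μ → μ.f i = π i) ∧
    ∀ i, i ∈ μ.dom ↔ (i ∈ Dset π μ ∨ π i ∉ (Dset π μ).image μ.f)

/-- The bad event associated to a matching. -/
def evt (n' k : ℕ) (π : Equiv.Perm (Fin n')) (μ : Matching n') : Set (Out n') :=
  {o : Out n' | o.prm = π} ∩
    {o : Out n' | k * (Dset π μ).card ≤ ∑ i ∈ Dset π μ, interDeg o.Gt1 o.Gt2 μ i}

/-- Post-composition of a matching with a permutation. -/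
def compPerm (π : Equiv.Perm (Fin n)) (μ : Matching n) : Matching n where
  dom := μ.dom
  f := ⇑π ∘ μ.f
  injOn := fun x hx y hy h => μ.injOn hx hy (π.injective h)

lemma compPerm_compPerm (π : Equiv.Perm (Fin n)) (μ : Matching n) :
    compPerm π⁻¹ (compPerm π μ) = μ := by
  refine matching_ext rfl ?_
  funext i
  show π⁻¹ (π (μ.f i)) = μ.f i
  simp

lemma adjB_eq (G : Graph n) {i j : Fin n} (h : i ≠ j) :
    adjB G i j = G ⟨s(i,j), by simpa [Sym2.mk_isDiag_iff] using h⟩ := dif_neg h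

lemma adjB_relabel (H : Graph n) (π : Equiv.Perm (Fin n)) (x y : Fin n) :
    adjB (fun e => H (edgeMap π⁻¹ e)) (π x) (π y) = adjB H x y := by
  by_cases h : x = y
  · subst h; simp [adjB]
  · have h' : π x ≠ π y := fun hc => h (π.injective hc)
    rw [adjB_eq _ h', adjB_eq _ h]
    exact congrArg H (Subtype.ext (by
      show Sym2.map ⇑π⁻¹ s(π x, π y) = s(x, y)
      rw [Sym2.map_pair_eq]
      simp))

lemma adjB_interGraph (H1 H2 : Graph n) (π : Equiv.Perm (Fin n)) (i j : Fin n) :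
    adjB (interGraph H1 H2 π) i j = (adjB H1 i j && adjB H2 (π i) (π j)) := by
  by_cases h : i = j
  · subst h; simp [adjB]
  · have h' : π i ≠ π j := fun hc => h (π.injective hc)
    rw [adjB_eq _ h, adjB_eq _ h, adjB_eq _ h']
    show interGraph H1 H2 π _ = _
    unfold interGraph
    congr 1

lemma interDeg_comp (H1 H2 : Graph n) (π : Equiv.Perm (Fin n)) (μ : Matching n) (i : Fin n) :
    interDeg H1 (fun e => H2 (edgeMap π⁻¹ e)) (compPerm π μ) i = interDeg H1 H2 μ i := by
  unfold interDeg
  congr 1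
  apply Finset.filter_congr
  intro j _
  show (adjB H1 i j ∧ adjB _ ((⇑π ∘ μ.f) i) ((⇑π ∘ μ.f) j)) ↔ _
  simp only [Function.comp_apply, adjB_relabel]

lemma interDeg_mono (H1 H2 : Graph n) (μ ν : Matching n) (hdom : μ.dom ⊆ ν.dom)
    (hf : ∀ j ∈ μ.dom, ν.f j = μ.f j) (i : Fin n) (hi : i ∈ μ.dom) :
    interDeg H1 H2 μ i ≤ interDeg H1 H2 ν i := by
  apply Finset.card_le_card
  intro j hj
  rw [Finset.mem_filter] at hj ⊢
  refine ⟨hdom hj.1, hj.2.1, ?_⟩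
  rw [hf i hi, hf j hj.1]
  exact hj.2.2

lemma Dset_comp (π : Equiv.Perm (Fin n)) (μ : Matching n) :
    Dset π (compPerm π μ) = Dset 1 μ := by
  unfold Dset
  apply Finset.filter_congr
  intro i _
  show (π (μ.f i) ≠ π i) ↔ (μ.f i ≠ (1 : Equiv.Perm (Fin n)) i)
  simp [π.injective.ne_iff]

lemma mem_image_comp (π : Equiv.Perm (Fin n)) (D : Finset (Fin n)) (g : Fin n → Fin n)
    (i : Fin n) : π i ∈ D.image (⇑π ∘ g) ↔ i ∈ D.image g := by
  simp only [Finset.mem_image, Function.comp_apply]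
  constructor
  · rintro ⟨x, hx, hxe⟩; exact ⟨x, hx, π.injective hxe⟩
  · rintro ⟨x, hx, hxe⟩; exact ⟨x, hx, by rw [hxe]⟩

lemma canon_comp (π : Equiv.Perm (Fin n)) (μ : Matching n) :
    Canon π (compPerm π μ) ↔ Canon 1 μ := by
  unfold Canon
  rw [Dset_comp]
  have hdom : (compPerm π μ).dom = μ.dom := rfl
  constructor
  · rintro ⟨h1, h2⟩
    refine ⟨fun i hi => ?_, fun i => ?_⟩
    · have := h1 i hi
      exact π.injective this
    · rw [← hdom, h2 i]
      have := mem_image_comp π (Dset 1 μ) μ.f i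
      show _ ∨ ¬ (π i ∈ _) ↔ _ ∨ ¬ ((1 : Equiv.Perm (Fin n)) i ∈ _)
      simp only [Equiv.Perm.coe_one, id_eq]
      rw [show (Dset 1 μ).image (compPerm π μ).f = (Dset 1 μ).image (⇑π ∘ μ.f) from rfl, this]
  · rintro ⟨h1, h2⟩
    refine ⟨fun i hi => ?_, fun i => ?_⟩
    · show π (μ.f i) = π i
      rw [h1 i hi]
      rfl
    · rw [hdom, h2 i]
      have := mem_image_comp π (Dset 1 μ) μ.f i
      show _ ∨ ¬ ((1 : Equiv.Perm (Fin n)) i ∈ _) ↔ _ ∨ ¬ (π i ∈ _)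
      simp only [Equiv.Perm.coe_one, id_eq]
      rw [show (Dset 1 μ).image (compPerm π μ).f = (Dset 1 μ).image (⇑π ∘ μ.f) from rfl, this]

lemma degInSet_mono (G : Graph n) {A B : Finset (Fin n)} (h : A ⊆ B) (i : Fin n) :
    degInSet G A i ≤ degInSet G B i :=
  Finset.card_le_card (Finset.filter_subset_filter _ h)

lemma coreSet_subset_coreK {G : Graph n} {k : ℕ} {A : Finset (Fin n)} (hA : IsCoreSet G k A) :
    A ⊆ coreK G k := by
  have : A ∈ (Finset.univ : Finset (Finset (Fin n))).filter (fun B => IsCoreSet G k B) := by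
    simp [hA]
  exact Finset.le_sup (f := id) this

lemma isCoreSet_coreK (G : Graph n) (k : ℕ) : IsCoreSet G k (coreK G k) := by
  intro i hi
  rw [coreK, Finset.mem_sup] at hi
  obtain ⟨A, hA, hiA⟩ := hi
  rw [Finset.mem_filter] at hA
  calc k ≤ degInSet G A i := hA.2 i hiA
    _ ≤ _ := degInSet_mono G (coreSet_subset_coreK hA.2) i

lemma interDeg_eq_degInSet (H1 H2 : Graph n) (π : Equiv.Perm (Fin n)) (μ : Matching n)
    (hagree : ∀ j ∈ μ.dom, μ.f j = π j) (i : Fin n) (hi : i ∈ μ.dom) :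
    interDeg H1 H2 μ i = degInSet (interGraph H1 H2 π) μ.dom i := by
  unfold interDeg degInSet
  congr 1
  apply Finset.filter_congr
  intro j hj
  rw [adjB_interGraph, hagree i hi, hagree j hj]
  simp [Bool.and_eq_true]

/-- The matching given by restricting a permutation to a set. -/
def permMatching (π : Equiv.Perm (Fin n)) (A : Finset (Fin n)) : Matching n :=
  ⟨A, ⇑π, fun _ _ _ _ h => π.injective h⟩

/-- Canonical `π`-maximal extension of a matching. -/
noncomputable def extM (π : Equiv.Perm (Fin n)) (ν : Matching n) : Matching n where
  dom := ν.dom ∪ Finset.univ.filter (fun i => i ∉ ν.dom ∧ π i ∉ ν.dom.image ν.f)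
  f := fun i => if i ∈ ν.dom then ν.f i else π i
  injOn := by
    intro x hx y hy hxy
    simp only [Finset.coe_union, Set.mem_union, Finset.mem_coe, Finset.mem_filter,
      Finset.mem_univ, true_and] at hx hy
    by_cases hxd : x ∈ ν.dom <;> by_cases hyd : y ∈ ν.dom
    · exact ν.injOn hxd hyd (by simpa [hxd, hyd] using hxy)
    · exfalso
      apply (hy.resolve_left hyd).2
      rw [Finset.mem_image]
      exact ⟨x, hxd, by simpa [hxd, hyd] using hxy⟩
    · exfalso
      apply (hx.resolve_left hxd).2
      rw [Finset.mem_image]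
      exact ⟨y, hyd, by simpa [hxd, hyd] using hxy.symm⟩
    · exact π.injective (by simpa [hxd, hyd] using hxy)

lemma extM_dom_sub (π : Equiv.Perm (Fin n)) (ν : Matching n) : ν.dom ⊆ (extM π ν).dom :=
  Finset.subset_union_left

lemma extM_f_in (π : Equiv.Perm (Fin n)) (ν : Matching n) {i : Fin n} (hi : i ∈ ν.dom) :
    (extM π ν).f i = ν.f i := if_pos hi

lemma extM_f_out (π : Equiv.Perm (Fin n)) (ν : Matching n) {i : Fin n} (hi : i ∉ ν.dom) :
    (extM π ν).f i = π i := if_neg hi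

lemma extM_Dset (π : Equiv.Perm (Fin n)) (ν : Matching n) :
    Dset π (extM π ν) = ν.dom.filter (fun i => ν.f i ≠ π i) := by
  ext i
  simp only [Dset, Finset.mem_filter]
  constructor
  · rintro ⟨hi, hne⟩
    by_cases hd : i ∈ ν.dom
    · exact ⟨hd, by rwa [extM_f_in π ν hd] at hne⟩
    · exact absurd (extM_f_out π ν hd) hne
  · rintro ⟨hd, hne⟩
    exact ⟨extM_dom_sub π ν hd, by rwa [extM_f_in π ν hd]⟩

lemma extM_f_eq (π : Equiv.Perm (Fin n)) (ν : Matching n) {i : Fin n}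
    (hi : i ∉ Dset π (extM π ν)) : (extM π ν).f i = π i := by
  by_cases hd : i ∈ ν.dom
  · by_contra hne
    exact hi (by
      simp only [Dset, Finset.mem_filter]
      exact ⟨extM_dom_sub π ν hd, hne⟩)
  · exact extM_f_out π ν hd

lemma extM_canon (π : Equiv.Perm (Fin n)) (ν : Matching n) : Canon π (extM π ν) := by
  refine ⟨fun i hi => extM_f_eq π ν hi, fun i => ?_⟩
  constructor
  · intro hi
    by_cases hD : i ∈ Dset π (extM π ν)
    · exact Or.inl hD
    · refine Or.inr fun hmem => ?_
      rw [Finset.mem_image] at hmem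
      obtain ⟨j, hjD, hji⟩ := hmem
      have hjdom : j ∈ (extM π ν).dom := Finset.filter_subset _ _ hjD
      have hfi : (extM π ν).f i = π i := extM_f_eq π ν hD
      have : i = j := (extM π ν).injOn (Finset.mem_coe.2 hi) (Finset.mem_coe.2 hjdom)
        (by rw [hfi, hji])
      exact hD (this ▸ hjD)
  · intro h
    by_contra hi
    have hnD : i ∉ Dset π (extM π ν) := fun hD => hi (Finset.filter_subset _ _ hD)
    have hmem : π i ∈ (Dset π (extM π ν)).image (extM π ν).f := by
      simp only [extM, Finset.mem_union, Finset.mem_filter, Finset.mem_univ, true_and,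
        not_or, not_and, not_not] at hi
      obtain ⟨hnd, himg⟩ := hi
      have himg' := himg hnd
      rw [Finset.mem_image] at himg'
      obtain ⟨j, hj, hji⟩ := himg'
      have hne : ν.f j ≠ π j := by
        intro he
        apply hnd
        have : i = j := π.injective (by rw [← hji, he])
        rwa [this]
      rw [Finset.mem_image]
      refine ⟨j, ?_, ?_⟩
      · rw [extM_Dset, Finset.mem_filter]; exact ⟨hj, hne⟩
      · rw [extM_f_in π ν hj, hji]
    rcases h with hD | himg
    · exact hnD hD
    · exact himg hmem

end MatchAux

section DetermAux

variable {n : ℕ}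

lemma determ {k : ℕ} {E : Graph n × Graph n → Matching n} (hE : IsKCoreEstimator k E)
    (o : Out n)
    (hbad : ¬ ((E (o.Gt1, o.Gt2)).dom = coreK (interGraph o.Gt1 o.Gt2 o.prm) k ∧
      ∀ i ∈ (E (o.Gt1, o.Gt2)).dom, (E (o.Gt1, o.Gt2)).f i = o.prm i)) :
    ∃ μ : Matching n, (Canon o.prm μ ∧ (Dset o.prm μ).Nonempty) ∧ o ∈ evt n k o.prm μ := by
  classical
  set ν := E (o.Gt1, o.Gt2) with hν
  set π := o.prm with hπ
  by_cases hD : (Dset π (extM π ν)).Nonempty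
  · refine ⟨extM π ν, ⟨extM_canon π ν, hD⟩, rfl, ?_⟩
    have hterm : ∀ i ∈ Dset π (extM π ν), k ≤ interDeg o.Gt1 o.Gt2 (extM π ν) i := by
      intro i hi
      have hi' : i ∈ ν.dom := by
        rw [extM_Dset] at hi; exact (Finset.mem_filter.1 hi).1
      calc k ≤ interDeg o.Gt1 o.Gt2 ν i := (hE (o.Gt1, o.Gt2)).1 i hi'
        _ ≤ _ := interDeg_mono _ _ ν (extM π ν) (extM_dom_sub π ν)
            (fun j hj => extM_f_in π ν hj) i hi'
    have hs := Finset.card_nsmul_le_sum (Dset π (extM π ν))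
      (fun i => interDeg o.Gt1 o.Gt2 (extM π ν) i) k hterm
    show k * (Dset π (extM π ν)).card ≤ _
    rw [mul_comm]
    simpa [smul_eq_mul] using hs
  · exfalso
    apply hbad
    rw [Finset.not_nonempty_iff_eq_empty, extM_Dset] at hD
    have hagree : ∀ i ∈ ν.dom, ν.f i = π i := by
      intro i hi
      by_contra hne
      have hmem : i ∈ ν.dom.filter (fun i => ν.f i ≠ π i) := Finset.mem_filter.2 ⟨hi, hne⟩
      rw [hD] at hmem
      exact absurd hmem (Finset.notMem_empty i)
    refine ⟨?_, hagree⟩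
    have hsub : ν.dom ⊆ coreK (interGraph o.Gt1 o.Gt2 π) k := by
      apply coreSet_subset_coreK
      intro i hi
      rw [← interDeg_eq_degInSet o.Gt1 o.Gt2 π ν hagree i hi]
      exact (hE (o.Gt1, o.Gt2)).1 i hi
    have hcard : (coreK (interGraph o.Gt1 o.Gt2 π) k).card ≤ ν.dom.card := by
      apply (hE (o.Gt1, o.Gt2)).2 (permMatching π (coreK (interGraph o.Gt1 o.Gt2 π) k))
      intro i hi
      show k ≤ interDeg o.Gt1 o.Gt2 (permMatching π (coreK (interGraph o.Gt1 o.Gt2 π) k)) i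
      rw [interDeg_eq_degInSet o.Gt1 o.Gt2 π _ (fun _ _ => rfl) i hi]
      exact isCoreSet_coreK _ k i hi
    exact Finset.eq_of_subset_of_card_le hsub hcard

lemma canon_count (n d : ℕ) :
    ((Finset.univ : Finset (Matching n)).filter
      (fun μ => (Canon 1 μ ∧ (Dset 1 μ).Nonempty) ∧ (Dset 1 μ).card = d)).card
      ≤ Nat.choose (n * n) d := by
  classical
  have hmap : ∀ μ ∈ (Finset.univ : Finset (Matching n)).filter
      (fun μ => (Canon 1 μ ∧ (Dset 1 μ).Nonempty) ∧ (Dset 1 μ).card = d),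
      (Dset 1 μ).image (fun i => (i, μ.f i)) ∈
        (Finset.univ : Finset (Fin n × Fin n)).powersetCard d := by
    intro μ hμ
    rw [Finset.mem_filter] at hμ
    rw [Finset.mem_powersetCard]
    refine ⟨Finset.subset_univ _, ?_⟩
    rw [Finset.card_image_of_injOn (fun i _ j _ h => congrArg Prod.fst h)]
    exact hμ.2.2
  have hinj : Set.InjOn (fun μ : Matching n => (Dset 1 μ).image (fun i => (i, μ.f i)))
      ↑((Finset.univ : Finset (Matching n)).filter
        (fun μ => (Canon 1 μ ∧ (Dset 1 μ).Nonempty) ∧ (Dset 1 μ).card = d)) := by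
    intro μ1 h1 μ2 h2 heq
    rw [Finset.mem_coe, Finset.mem_filter] at h1 h2
    obtain ⟨c1, -⟩ := h1.2.1
    obtain ⟨c2, -⟩ := h2.2.1
    simp only at heq
    have hD : Dset 1 μ1 = Dset 1 μ2 := by
      have himg := congrArg (Finset.image Prod.fst) heq
      rwa [Finset.image_image, Finset.image_image,
        (by funext i; rfl : (Prod.fst ∘ fun i => (i, μ1.f i)) = id),
        (by funext i; rfl : (Prod.fst ∘ fun i => (i, μ2.f i)) = id),
        Finset.image_id, Finset.image_id] at himg
    have hf : μ1.f = μ2.f := by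
      funext i
      by_cases hi : i ∈ Dset 1 μ1
      · have hmem : (i, μ1.f i) ∈ (Dset 1 μ2).image (fun j => (j, μ2.f j)) := by
          rw [← heq]
          exact Finset.mem_image_of_mem _ hi
        rw [Finset.mem_image] at hmem
        obtain ⟨j, _, hje⟩ := hmem
        have hji : j = i := congrArg Prod.fst hje
        subst hji
        exact (congrArg Prod.snd hje).symm
      · rw [c1.1 i hi, c2.1 i (hD ▸ hi)]
    exact matching_ext (by ext i; rw [c1.2 i, c2.2 i, hD, hf]) hf
  calc _ ≤ ((Finset.univ : Finset (Fin n × Fin n)).powersetCard d).card :=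
      Finset.card_le_card_of_injOn _ hmap hinj
    _ = Nat.choose (n*n) d := by
      rw [Finset.card_powersetCard, Finset.card_univ, Fintype.card_prod, Fintype.card_fin]

end DetermAux

section ProbAux

variable {n : ℕ}

lemma WCG_apply (p s : ℝ) (a b : ℕ) (A : Set (Out n)) :
    WCG n p s a b A = wcgBase n p s a b (wcgBuild n ⁻¹' A) :=
  Measure.map_apply Measurable.of_discrete MeasurableSet.of_discrete

lemma wcgBase_isProb (p s : ℝ) {a b : ℕ} (ha : a ≤ n) (hb : b ≤ n) :
    IsProbabilityMeasure (wcgBase n p s a b) := by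
  haveI := uniformSized_isProb (n := n) ha
  haveI := uniformSized_isProb (n := n) hb
  unfold wcgBase
  infer_instance

lemma wcg_isProb (p s : ℝ) {a b : ℕ} (ha : a ≤ n) (hb : b ≤ n) :
    IsProbabilityMeasure (WCG n p s a b) := by
  haveI := wcgBase_isProb (n := n) p s ha hb
  exact Measure.isProbabilityMeasure_map (Measurable.of_discrete).aemeasurable

lemma WCG_evt_symm (p s : ℝ) {a b : ℕ} (ha : a ≤ n) (hb : b ≤ n) (k : ℕ)
    (π : Equiv.Perm (Fin n)) (μ : Matching n) :
    WCG n p s a b (evt n k π (compPerm π μ)) = WCG n p s a b (evt n k 1 μ) := by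
  rw [WCG_apply, WCG_apply]
  have hpre : phi π ⁻¹' (wcgBuild n ⁻¹' evt n k π (compPerm π μ)) =
      wcgBuild n ⁻¹' evt n k 1 μ := by
    ext ω
    simp only [Set.mem_preimage]
    rw [build_phi]
    simp only [evt, Set.mem_inter_iff, Set.mem_setOf_eq]
    have hsum : ∑ i ∈ Dset π (compPerm π μ),
        interDeg (wcgBuild n ω).Gt1 (fun e => (wcgBuild n ω).Gt2 (edgeMap π⁻¹ e))
          (compPerm π μ) i
        = ∑ i ∈ Dset 1 μ, interDeg (wcgBuild n ω).Gt1 (wcgBuild n ω).Gt2 μ i := by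
      rw [Dset_comp]
      exact Finset.sum_congr rfl fun i _ =>
        interDeg_comp (wcgBuild n ω).Gt1 (wcgBuild n ω).Gt2 π μ i
    rw [hsum, Dset_comp, mul_eq_left]
  rw [← hpre]
  exact ((phi_mp π p s a b ha hb).measure_preimage
    MeasurableSet.of_discrete.nullMeasurableSet).symm

lemma WCG_prm_symm (p s : ℝ) {a b : ℕ} (ha : a ≤ n) (hb : b ≤ n) (π : Equiv.Perm (Fin n)) :
    WCG n p s a b {o : Out n | o.prm = π} = WCG n p s a b {o : Out n | o.prm = 1} := by
  rw [WCG_apply, WCG_apply]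
  have hpre : phi π ⁻¹' (wcgBuild n ⁻¹' {o : Out n | o.prm = π}) =
      wcgBuild n ⁻¹' {o : Out n | o.prm = 1} := by
    ext ω
    simp only [Set.mem_preimage, Set.mem_setOf_eq]
    rw [build_phi]
    show π * (wcgBuild n ω).prm = π ↔ _
    rw [mul_eq_left]
  rw [← hpre]
  exact ((phi_mp π p s a b ha hb).measure_preimage
    MeasurableSet.of_discrete.nullMeasurableSet).symm

lemma WCG_prm_one (p s : ℝ) {a b : ℕ} (ha : a ≤ n) (hb : b ≤ n) :
    WCG n p s a b {o : Out n | o.prm = 1} = ((n.factorial : ℝ≥0∞))⁻¹ := by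
  haveI := wcg_isProb (n := n) p s ha hb
  have hunion : (⋃ π ∈ (Finset.univ : Finset (Equiv.Perm (Fin n))),
      {o : Out n | o.prm = π}) = Set.univ := by
    ext o
    simp only [Set.mem_iUnion, Set.mem_setOf_eq, Set.mem_univ, iff_true]
    exact ⟨o.prm, Finset.mem_univ _, rfl⟩
  have hsum : ∑ π ∈ (Finset.univ : Finset (Equiv.Perm (Fin n))),
      WCG n p s a b {o : Out n | o.prm = π} = 1 := by
    rw [← measure_biUnion_finset ?_ (fun _ _ => MeasurableSet.of_discrete), hunion,
      measure_univ]
    intro x _ y _ hxy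
    simp only [Function.onFun, Set.disjoint_left, Set.mem_setOf_eq]
    rintro o rfl
    exact fun hc => hxy hc
  rw [Finset.sum_congr rfl (fun π _ => WCG_prm_symm p s ha hb π), Finset.sum_const,
    Finset.card_univ, Fintype.card_perm, Fintype.card_fin, nsmul_eq_mul] at hsum
  have hne : ((n.factorial : ℝ≥0∞)) ≠ 0 := by
    exact_mod_cast n.factorial_ne_zero
  have hnt : ((n.factorial : ℝ≥0∞)) ≠ ∞ := by simp
  calc WCG n p s a b {o : Out n | o.prm = 1}
      = ((n.factorial : ℝ≥0∞))⁻¹ * ((n.factorial : ℝ≥0∞) *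
        WCG n p s a b {o : Out n | o.prm = 1}) := by
        rw [← mul_assoc, ENNReal.inv_mul_cancel hne hnt, one_mul]
    _ = ((n.factorial : ℝ≥0∞))⁻¹ := by rw [hsum, mul_one]

lemma cond_toReal_le_one {α : Type*} [MeasurableSpace α] (μ : Measure α) (s t : Set α)
    (hs : MeasurableSet s) : (ProbabilityTheory.cond μ s t).toReal ≤ 1 := by
  rw [ProbabilityTheory.cond_apply hs]
  rcases eq_or_ne (μ s) 0 with h0 | h0
  · have h : μ (s ∩ t) = 0 := measure_mono_null Set.inter_subset_left h0
    simp [h]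
  rcases eq_or_ne (μ s) ∞ with hT | hT
  · simp [hT]
  · have hle : (μ s)⁻¹ * μ (s ∩ t) ≤ (μ s)⁻¹ * μ s :=
      mul_le_mul_right (measure_mono Set.inter_subset_left) _
    rw [ENNReal.inv_mul_cancel h0 hT] at hle
    calc ((μ s)⁻¹ * μ (s ∩ t)).toReal ≤ (1 : ℝ≥0∞).toReal :=
        ENNReal.toReal_mono (by simp) hle
      _ = 1 := by simp

end ProbAux

section FinalAux

variable {n : ℕ}

lemma Dset_one (μ : Matching n) :
    Dset 1 μ = μ.dom.filter (fun i => μ.f i ≠ i) := rfl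

lemma canon_maximal {μ : Matching n} (hc : Canon 1 μ) :
    ∀ i : Fin n, i ∈ μ.dom ∨ i ∈ μ.dom.image μ.f := by
  intro i
  by_cases hi : i ∈ μ.dom
  · exact Or.inl hi
  · right
    have h2 := (hc.2 i)
    rw [iff_iff_implies_and_implies] at h2
    by_cases hD : i ∈ Dset 1 μ
    · exact absurd (Finset.filter_subset _ _ hD) hi
    · have : ¬ ((1 : Equiv.Perm (Fin n)) i ∉ (Dset 1 μ).image μ.f) := by
        intro hmem
        exact hi (h2.2 (Or.inr hmem))
      rw [not_not] at this
      have h1i : (1 : Equiv.Perm (Fin n)) i = i := rfl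
      rw [h1i] at this
      exact Finset.image_subset_image (Finset.filter_subset _ _) this

lemma cond_le_one {α : Type*} [MeasurableSpace α] (μ : Measure α) {s : Set α}
    (hs : MeasurableSet s) (t : Set α) : ProbabilityTheory.cond μ s t ≤ 1 := by
  rw [ProbabilityTheory.cond_apply hs]
  rcases eq_or_ne (μ s) 0 with h0 | h0
  · have h : μ (s ∩ t) = 0 := measure_mono_null Set.inter_subset_left h0
    simp [h]
  rcases eq_or_ne (μ s) ∞ with hT | hT
  · simp [hT]
  · calc (μ s)⁻¹ * μ (s ∩ t) ≤ (μ s)⁻¹ * μ s :=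
        mul_le_mul_right (measure_mono Set.inter_subset_left) _
      _ = 1 := ENNReal.inv_mul_cancel h0 hT

lemma cond_ne_top {α : Type*} [MeasurableSpace α] (μ : Measure α) {s : Set α}
    (hs : MeasurableSet s) (t : Set α) : ProbabilityTheory.cond μ s t ≠ ∞ :=
  (lt_of_le_of_lt (cond_le_one μ hs t) ENNReal.one_lt_top).ne

lemma le_nested_iSup {ι : Type*} (g : ℕ → ι → ℝ) (P : ℕ → Prop) (Q : ℕ → ι → Prop)
    (hb : ∀ d μ, g d μ ≤ 1) (d : ℕ) (i : ι) (hP : P d) (hQ : Q d i) :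
    g d i ≤ ⨆ (d : ℕ) (_ : P d) (μ : ι) (_ : Q d μ), g d μ := by
  have step1 : g d i = ⨆ (_ : Q d i), g d i := (ciSup_pos (f := fun _ => g d i) hQ).symm
  have h2 : (⨆ (_ : Q d i), g d i) ≤ ⨆ (μ : ι) (_ : Q d μ), g d μ := by
    apply le_ciSup (f := fun μ => ⨆ (_ : Q d μ), g d μ) ?_ i
    refine ⟨1, ?_⟩
    rintro x ⟨μ, rfl⟩
    exact Real.iSup_le (fun _ => hb d μ) zero_le_one
  have h3 : (⨆ (μ : ι) (_ : Q d μ), g d μ) = ⨆ (_ : P d) (μ : ι) (_ : Q d μ), g d μ :=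
    (ciSup_pos (f := fun _ => ⨆ (μ : ι) (_ : Q d μ), g d μ) hP).symm
  have h4 : (⨆ (_ : P d) (μ : ι) (_ : Q d μ), g d μ) ≤
      ⨆ (d : ℕ) (_ : P d) (μ : ι) (_ : Q d μ), g d μ := by
    apply le_ciSup (f := fun d => ⨆ (_ : P d) (μ : ι) (_ : Q d μ), g d μ) ?_ d
    refine ⟨1, ?_⟩
    rintro x ⟨d', rfl⟩
    exact Real.iSup_le (fun _ => Real.iSup_le
      (fun μ => Real.iSup_le (fun _ => hb d' μ) zero_le_one) zero_le_one) zero_le_one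
  calc g d i = _ := step1
    _ ≤ _ := h2
    _ = _ := h3
    _ ≤ _ := h4

lemma sum_icc_le_exp_sub_one {x : ℝ} (hx : 0 ≤ x) (n : ℕ) :
    ∑ d ∈ Finset.Icc 1 n, x ^ d / (Nat.factorial d) ≤ Real.exp x - 1 := by
  have hr : Finset.range (n + 1) = insert 0 (Finset.Icc 1 n) := by
    ext m
    simp only [Finset.mem_range, Finset.mem_insert, Finset.mem_Icc]
    omega
  have hs := Real.sum_le_exp_of_nonneg hx (n + 1)
  rw [hr, Finset.sum_insert (by simp)] at hs
  simp only [pow_zero, Nat.factorial_zero, Nat.cast_one, div_one] at hs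
  linarith

end FinalAux

/-- the k-core estimator's output has domain equal to the k-core of the true
intersection graph and agrees with π* on it, with probability at least `2 - exp(n²ξ)`. -/
theorem stmt13 (n k : ℕ) (p s γ lam : ℝ)
    (hp : p ∈ Set.Ioo (0:ℝ) 1) (hs : s ∈ Set.Ioc (0:ℝ) 1)
    (hγ : γ ∈ Set.Icc (0:ℝ) 1) (hlam : lam ∈ Set.Icc (0:ℝ) 1)
    (a b : ℕ) (ha : (a : ℝ) = lam * γ * n) (hb : (b : ℝ) = (1 - lam) * γ * n)
    (E : Graph n × Graph n → Matching n) (hE : IsKCoreEstimator k E)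
    (ξ : ℝ)
    (hξ : ξ = ⨆ (d : ℕ) (_ : d ∈ Finset.Icc 1 n) (μ : Matching n)
        (_ : (∀ i : Fin n, i ∈ μ.dom ∨ i ∈ μ.dom.image μ.f) ∧
             (μ.dom.filter fun i => μ.f i ≠ i).card = d),
        ((ProbabilityTheory.cond (WCG n p s a b) {ω : Out n | ω.prm = 1})
            {ω : Out n | k * d ≤
              ∑ i ∈ μ.dom.filter (fun i => μ.f i ≠ i), interDeg ω.Gt1 ω.Gt2 μ i}).toReal
          ^ ((d : ℝ)⁻¹)) :
    2 - Real.exp ((n : ℝ) ^ 2 * ξ) ≤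
      (WCG n p s a b {ω : Out n |
          (E (ω.Gt1, ω.Gt2)).dom = coreK (interGraph ω.Gt1 ω.Gt2 ω.prm) k ∧
          ∀ i ∈ (E (ω.Gt1, ω.Gt2)).dom, (E (ω.Gt1, ω.Gt2)).f i = ω.prm i}).toReal := by
  classical
  -- size bounds on a and b
  have han : a ≤ n := by
    have h1 : lam * γ ≤ 1 := by nlinarith [hlam.1, hlam.2, hγ.1, hγ.2]
    have h2 : (a : ℝ) ≤ (n : ℝ) := by
      rw [ha]
      nlinarith [Nat.cast_nonneg (α := ℝ) n]
    exact_mod_cast h2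
  have hbn : b ≤ n := by
    have h1 : (1 - lam) * γ ≤ 1 := by nlinarith [hlam.1, hlam.2, hγ.1, hγ.2]
    have h2 : (b : ℝ) ≤ (n : ℝ) := by
      rw [hb]
      nlinarith [Nat.cast_nonneg (α := ℝ) n]
    exact_mod_cast h2
  haveI hQP : IsProbabilityMeasure (WCG n p s a b) := wcg_isProb p s han hbn
  set Q := WCG n p s a b with hQdef
  -- the good event
  set Sg : Set (Out n) := {ω : Out n |
      (E (ω.Gt1, ω.Gt2)).dom = coreK (interGraph ω.Gt1 ω.Gt2 ω.prm) k ∧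
      ∀ i ∈ (E (ω.Gt1, ω.Gt2)).dom, (E (ω.Gt1, ω.Gt2)).f i = ω.prm i} with hSg
  -- notation for the conditional probabilities appearing in ξ
  set r : Matching n → ℝ := fun μ =>
    (ProbabilityTheory.cond Q {ω : Out n | ω.prm = 1}
      {ω : Out n | k * (μ.dom.filter fun i => μ.f i ≠ i).card ≤
        ∑ i ∈ μ.dom.filter (fun i => μ.f i ≠ i), interDeg ω.Gt1 ω.Gt2 μ i}).toReal with hr
  set C1 : Finset (Matching n) :=
    Finset.univ.filter (fun μ : Matching n => Canon 1 μ ∧ (Dset 1 μ).Nonempty) with hC1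
  have hfacne : ((n.factorial : ℝ≥0∞)) ≠ 0 := by exact_mod_cast n.factorial_ne_zero
  have hfacnt : ((n.factorial : ℝ≥0∞)) ≠ ∞ := by simp
  -- ξ is nonnegative
  have hξ0 : 0 ≤ ξ := by
    rw [hξ]
    apply Real.iSup_nonneg; intro d
    apply Real.iSup_nonneg; intro _
    apply Real.iSup_nonneg; intro μ
    apply Real.iSup_nonneg; intro _
    positivity
  -- each conditional probability is at most ξ ^ d
  have hrle : ∀ μ ∈ C1, r μ ≤ ξ ^ ((Dset 1 μ).card) := by
    intro μ hμ
    rw [hC1, Finset.mem_filter] at hμ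
    obtain ⟨-, hcan, hne⟩ := hμ
    set d := (Dset 1 μ).card with hd
    have hd1 : 1 ≤ d := Finset.Nonempty.card_pos hne
    have hdn : d ≤ n := by
      calc d ≤ (Finset.univ : Finset (Fin n)).card := Finset.card_le_univ _
        _ = n := by rw [Finset.card_univ, Fintype.card_fin]
    have hr0 : 0 ≤ r μ := ENNReal.toReal_nonneg
    have hr1 : r μ ≤ 1 := cond_toReal_le_one _ _ _ MeasurableSet.of_discrete
    have hcard : (μ.dom.filter fun i => μ.f i ≠ i).card = d := by
      rw [hd, Dset_one]
    have hval : r μ ^ ((d : ℝ)⁻¹) ≤ ξ := by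
      rw [hξ]
      have := le_nested_iSup
        (g := fun (d : ℕ) (μ : Matching n) =>
          ((ProbabilityTheory.cond (WCG n p s a b) {ω : Out n | ω.prm = 1})
            {ω : Out n | k * d ≤
              ∑ i ∈ μ.dom.filter (fun i => μ.f i ≠ i), interDeg ω.Gt1 ω.Gt2 μ i}).toReal
          ^ ((d : ℝ)⁻¹))
        (P := fun d => d ∈ Finset.Icc 1 n)
        (Q := fun d μ => (∀ i : Fin n, i ∈ μ.dom ∨ i ∈ μ.dom.image μ.f) ∧
             (μ.dom.filter fun i => μ.f i ≠ i).card = d)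
        (hb := fun d μ => by
          apply Real.rpow_le_one ENNReal.toReal_nonneg
            (cond_toReal_le_one _ _ _ MeasurableSet.of_discrete)
          positivity)
        (d := d) (i := μ)
        (hP := Finset.mem_Icc.2 ⟨hd1, hdn⟩)
        (hQ := ⟨canon_maximal hcan, hcard⟩)
      exact this
    calc r μ = (r μ ^ ((d : ℝ)⁻¹)) ^ d :=
        (Real.rpow_inv_natCast_pow hr0 (by omega)).symm
      _ ≤ ξ ^ d := by
        apply pow_le_pow_left₀ (Real.rpow_nonneg hr0 _) hval
  -- union bound in ℝ≥0∞
  have hsub : Sgᶜ ⊆ ⋃ π ∈ (Finset.univ : Finset (Equiv.Perm (Fin n))),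
      ⋃ μ ∈ (Finset.univ.filter
        (fun μ : Matching n => Canon π μ ∧ (Dset π μ).Nonempty)),
      evt n k π μ := by
    intro o ho
    obtain ⟨μ, ⟨hc, hne⟩, hev⟩ := determ hE o ho
    refine Set.mem_biUnion (Finset.mem_univ o.prm) ?_
    exact Set.mem_biUnion (Finset.mem_filter.2 ⟨Finset.mem_univ _, hc, hne⟩) hev
  have hQbad : Q Sgᶜ ≤ ∑ π ∈ (Finset.univ : Finset (Equiv.Perm (Fin n))),
      ∑ μ ∈ (Finset.univ.filter
        (fun μ : Matching n => Canon π μ ∧ (Dset π μ).Nonempty)),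
      Q (evt n k π μ) := by
    calc Q Sgᶜ ≤ Q (⋃ π ∈ (Finset.univ : Finset (Equiv.Perm (Fin n))),
        ⋃ μ ∈ (Finset.univ.filter
          (fun μ : Matching n => Canon π μ ∧ (Dset π μ).Nonempty)),
        evt n k π μ) := measure_mono hsub
      _ ≤ ∑ π ∈ (Finset.univ : Finset (Equiv.Perm (Fin n))),
          Q (⋃ μ ∈ (Finset.univ.filter
            (fun μ : Matching n => Canon π μ ∧ (Dset π μ).Nonempty)),
          evt n k π μ) := measure_biUnion_finset_le _ _
      _ ≤ _ := Finset.sum_le_sum fun π _ => measure_biUnion_finset_le _ _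
  -- reindex the inner sums to π = 1
  have hreindex : ∀ π : Equiv.Perm (Fin n),
      ∑ μ ∈ (Finset.univ.filter
        (fun μ : Matching n => Canon π μ ∧ (Dset π μ).Nonempty)),
        Q (evt n k π μ)
      = ∑ μ ∈ C1, Q (evt n k 1 μ) := by
    intro π
    have hinvinv : ∀ μ : Matching n, compPerm π (compPerm π⁻¹ μ) = μ := by
      intro μ
      have h := compPerm_compPerm π⁻¹ μ
      rwa [inv_inv] at h
    refine Finset.sum_nbij' (i := fun μ => compPerm π⁻¹ μ) (j := fun μ => compPerm π μ)
      ?_ ?_ ?_ ?_ ?_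
    · intro μ hμ
      rw [Finset.mem_filter] at hμ ⊢
      obtain ⟨-, hcan, hne⟩ := hμ
      refine ⟨Finset.mem_univ _, ?_, ?_⟩
      · rw [← canon_comp π (compPerm π⁻¹ μ), hinvinv μ]
        exact hcan
      · rw [← Dset_comp π (compPerm π⁻¹ μ), hinvinv μ]
        exact hne
    · intro μ hμ
      rw [hC1, Finset.mem_filter] at hμ
      rw [Finset.mem_filter]
      obtain ⟨-, hcan, hne⟩ := hμ
      refine ⟨Finset.mem_univ _, ?_, ?_⟩
      · exact (canon_comp π μ).2 hcan
      · rw [Dset_comp π μ]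
        exact hne
    · intro μ _
      exact hinvinv μ
    · intro μ _
      exact compPerm_compPerm π μ
    · intro μ hμ
      have h := WCG_evt_symm p s han hbn k π (compPerm π⁻¹ μ)
      rw [hinvinv μ] at h
      rw [← hQdef] at h
      exact h
  -- single-term computation
  have hterm : ∀ μ : Matching n,
      Q (evt n k 1 μ) = ((n.factorial : ℝ≥0∞))⁻¹ *
      (ProbabilityTheory.cond Q {ω : Out n | ω.prm = 1}
        {ω : Out n | k * (μ.dom.filter fun i => μ.f i ≠ i).card ≤
          ∑ i ∈ μ.dom.filter (fun i => μ.f i ≠ i), interDeg ω.Gt1 ω.Gt2 μ i}) := by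
    intro μ
    rw [ProbabilityTheory.cond_apply MeasurableSet.of_discrete]
    rw [hQdef, WCG_prm_one p s han hbn, inv_inv, ← mul_assoc,
      ENNReal.inv_mul_cancel hfacne hfacnt, one_mul]
    rfl
  -- pass to real numbers
  set T : ℝ := ∑ μ ∈ C1, r μ with hT
  have hQbadR : (Q Sgᶜ).toReal ≤ (n.factorial : ℝ) * ((n.factorial : ℝ)⁻¹ * T) := by
    have h1 : Q Sgᶜ ≤ ∑ π ∈ (Finset.univ : Finset (Equiv.Perm (Fin n))),
        ∑ μ ∈ C1, Q (evt n k 1 μ) := by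
      rw [← Finset.sum_congr rfl (fun π _ => hreindex π)]
      exact hQbad
    have hfin : (∑ π ∈ (Finset.univ : Finset (Equiv.Perm (Fin n))),
        ∑ μ ∈ C1, Q (evt n k 1 μ)) ≠ ∞ :=
      (ENNReal.sum_lt_top.2 fun _ _ => ENNReal.sum_lt_top.2
        fun _ _ => measure_lt_top _ _).ne
    have h2 := ENNReal.toReal_mono hfin h1
    have h3 : (∑ π ∈ (Finset.univ : Finset (Equiv.Perm (Fin n))),
        ∑ μ ∈ C1, Q (evt n k 1 μ)).toReal
        = (n.factorial : ℝ) * ((n.factorial : ℝ)⁻¹ * T) := by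
      rw [Finset.sum_const, Finset.card_univ, Fintype.card_perm, Fintype.card_fin,
        nsmul_eq_mul, ENNReal.toReal_mul, ENNReal.toReal_natCast]
      congr 1
      rw [ENNReal.toReal_sum (fun μ _ => measure_ne_top _ _)]
      rw [hT, Finset.mul_sum]
      apply Finset.sum_congr rfl
      intro μ _
      rw [hterm μ, ENNReal.toReal_mul, ENNReal.toReal_inv, ENNReal.toReal_natCast]
    rw [← h3]
    exact h2
  have hfacR : ((n.factorial : ℝ)) ≠ 0 := by exact_mod_cast n.factorial_ne_zero
  have hQbadR2 : (Q Sgᶜ).toReal ≤ T := by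
    rw [← mul_assoc, mul_inv_cancel₀ hfacR, one_mul] at hQbadR
    exact hQbadR
  -- bound T
  have hmapsto : ∀ μ ∈ C1, (Dset 1 μ).card ∈ Finset.Icc 1 n := by
    intro μ hμ
    rw [hC1, Finset.mem_filter] at hμ
    refine Finset.mem_Icc.2 ⟨Finset.Nonempty.card_pos hμ.2.2, ?_⟩
    calc (Dset 1 μ).card ≤ (Finset.univ : Finset (Fin n)).card := Finset.card_le_univ _
      _ = n := by rw [Finset.card_univ, Fintype.card_fin]
  have hs1 : T = ∑ d ∈ Finset.Icc 1 n,
      ∑ μ ∈ C1.filter (fun μ => (Dset 1 μ).card = d), r μ :=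
    (Finset.sum_fiberwise_of_maps_to hmapsto r).symm
  have hs2 : ∀ d ∈ Finset.Icc 1 n,
      ∑ μ ∈ C1.filter (fun μ => (Dset 1 μ).card = d), r μ
      ≤ (Nat.choose (n*n) d : ℝ) * ξ ^ d := by
    intro d _
    have hbound : ∀ μ ∈ C1.filter (fun μ => (Dset 1 μ).card = d), r μ ≤ ξ ^ d := by
      intro μ hμ
      rw [Finset.mem_filter] at hμ
      have h := hrle μ hμ.1
      rwa [hμ.2] at h
    calc ∑ μ ∈ C1.filter (fun μ => (Dset 1 μ).card = d), r μ
        ≤ (C1.filter (fun μ => (Dset 1 μ).card = d)).card • (ξ ^ d) :=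
        Finset.sum_le_card_nsmul _ _ _ hbound
      _ = ((C1.filter (fun μ => (Dset 1 μ).card = d)).card : ℝ) * ξ ^ d :=
        nsmul_eq_mul _ _
      _ ≤ (Nat.choose (n*n) d : ℝ) * ξ ^ d := by
        apply mul_le_mul_of_nonneg_right ?_ (pow_nonneg hξ0 d)
        have hcc : (C1.filter (fun μ => (Dset 1 μ).card = d)).card ≤ Nat.choose (n*n) d := by
          rw [hC1, Finset.filter_filter]
          exact canon_count n d
        exact_mod_cast hcc
  have hs3 : ∀ d ∈ Finset.Icc 1 n, (Nat.choose (n*n) d : ℝ) * ξ ^ d ≤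
      ((n:ℝ)^2 * ξ) ^ d / (Nat.factorial d) := by
    intro d _
    have hnat : Nat.choose (n*n) d * Nat.factorial d ≤ (n*n)^d := by
      calc Nat.choose (n*n) d * Nat.factorial d
          = Nat.factorial d * Nat.choose (n*n) d := Nat.mul_comm _ _
        _ = Nat.descFactorial (n*n) d := (Nat.descFactorial_eq_factorial_mul_choose _ _).symm
        _ ≤ (n*n)^d := Nat.descFactorial_le_pow _ _
    have hchoose : (Nat.choose (n*n) d : ℝ) ≤ ((n:ℝ)^2)^d / (Nat.factorial d) := by
      rw [le_div_iff₀ (by positivity : (0:ℝ) < (Nat.factorial d : ℝ))]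
      have h2 : ((n:ℝ)^2)^d = (((n*n : ℕ) : ℝ))^d := by
        push_cast
        ring
      rw [h2]
      exact_mod_cast hnat
    calc (Nat.choose (n*n) d : ℝ) * ξ ^ d
        ≤ (((n:ℝ)^2)^d / (Nat.factorial d)) * ξ ^ d :=
        mul_le_mul_of_nonneg_right hchoose (pow_nonneg hξ0 d)
      _ = ((n:ℝ)^2 * ξ) ^ d / (Nat.factorial d) := by
        rw [mul_pow]
        ring
  have hTbound : T ≤ Real.exp ((n:ℝ)^2 * ξ) - 1 := by
    calc T = ∑ d ∈ Finset.Icc 1 n,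
        ∑ μ ∈ C1.filter (fun μ => (Dset 1 μ).card = d), r μ := hs1
      _ ≤ ∑ d ∈ Finset.Icc 1 n, (Nat.choose (n*n) d : ℝ) * ξ ^ d :=
        Finset.sum_le_sum hs2
      _ ≤ ∑ d ∈ Finset.Icc 1 n, ((n:ℝ)^2 * ξ) ^ d / (Nat.factorial d) :=
        Finset.sum_le_sum hs3
      _ ≤ Real.exp ((n:ℝ)^2 * ξ) - 1 :=
        sum_icc_le_exp_sub_one (by positivity) n
  -- conclude
  have hadd : Q Sg + Q Sgᶜ = 1 := by
    rw [measure_add_measure_compl MeasurableSet.of_discrete]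
    exact measure_univ
  have haddR := congrArg ENNReal.toReal hadd
  rw [ENNReal.toReal_add (measure_ne_top _ _) (measure_ne_top _ _), ENNReal.toReal_one]
    at haddR
  linarith

end Paper
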